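/- For α > 0 and m ≥ 2, with a_max = (y+1)(m^{1/α} − 1)/(m^{1+1/α} − 1), one has lim_{y→∞} (∫_{a_max}^{a_max·m} ((y+1−x)^α / y^α) dx)/(∫_1^y ((y+1−x)^α / y^α) dx) = (m−1)·((m−1)/(m^{1+1/α} − 1))^α. -/

import Mathlib

open Filter Real intervalIntegral

theorem limit_ratio_pos_alpha (α : ℝ) (hα : 0 < α) (m : ℕ) (hm : 2 ≤ m) :
    Filter.Tendsto
      (fun y : ℝ =>
        (∫ x in ((y + 1) * ((m : ℝ) ^ (1 / α) - 1) / ((m : ℝ) ^ (1 + 1 / α) - 1))..(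
            (y + 1) * ((m : ℝ) ^ (1 / α) - 1) / ((m : ℝ) ^ (1 + 1 / α) - 1) * m),
          (y + 1 - x) ^ α / y ^ α) /
        ∫ x in (1 : ℝ)..y, (y + 1 - x) ^ α / y ^ α)
      Filter.atTop
      (nhds (((m : ℝ) - 1) * (((m : ℝ) - 1) / ((m : ℝ) ^ (1 + 1 / α) - 1)) ^ α)) := by
  have hm1 : (1:ℝ) < (m:ℝ) := by exact_mod_cast lt_of_lt_of_le one_lt_two hm
  have hmpos : (0:ℝ) < (m:ℝ) := by linarith
  set q := (m : ℝ) ^ (1 / α) with hq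
  have hq1 : 1 < q := by
    rw [hq]
    exact (Real.one_lt_rpow_iff_of_pos hmpos).mpr (Or.inl ⟨hm1, by positivity⟩)
  have hq0 : (0:ℝ) ≤ q := by linarith
  have hM : (m : ℝ) ^ (1 + 1 / α) = (m:ℝ) * q := by
    rw [Real.rpow_add hmpos, Real.rpow_one, hq]
  have hmq1 : 1 < (m:ℝ) * q := by nlinarith
  have hmq0 : (0:ℝ) < (m:ℝ) * q - 1 := by linarith
  have hm0 : (0:ℝ) < (m:ℝ) - 1 := by linarith
  have hfrac0 : 0 < ((m:ℝ) - 1) / ((m:ℝ) * q - 1) := div_pos hm0 hmq0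
  simp only [hM]
  set F := (((m:ℝ) - 1) / ((m:ℝ) * q - 1)) ^ α with hF
  -- auxiliary limits
  have h0 : Tendsto (fun y : ℝ => (y + 1) / y) atTop (nhds 1) := by
    have h := (tendsto_const_nhds (α := ℝ) (f := atTop) (x := (1:ℝ))).add tendsto_inv_atTop_zero
    rw [add_zero] at h
    refine h.congr' ?_
    filter_upwards [eventually_gt_atTop (0:ℝ)] with y hy
    field_simp
  have h1 : Tendsto (fun y : ℝ => ((y + 1) / y) ^ (α + 1)) atTop (nhds 1) := by
    have := h0.rpow_const (Or.inl one_ne_zero) (p := α + 1)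
    rwa [Real.one_rpow] at this
  have h2 : Tendsto (fun y : ℝ => y ^ (α + 1) / (y ^ (α + 1) - 1)) atTop (nhds 1) := by
    have ht : Tendsto (fun t : ℝ => t / (t - 1)) atTop (nhds 1) := by
      have h := (tendsto_const_nhds (α := ℝ) (f := atTop) (x := (1:ℝ))).add
        (tendsto_inv_atTop_zero.comp (tendsto_atTop_add_const_right atTop (-1) tendsto_id))
      rw [add_zero] at h
      refine h.congr' ?_
      filter_upwards [eventually_gt_atTop (1:ℝ)] with t hti
      have h2' : t - 1 ≠ 0 := by linarith
      have h3' : t + -1 ≠ 0 := by linarith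
      simp only [Function.comp_apply, id_eq]
      rw [eq_div_iff h2']
      field_simp
      ring
    exact ht.comp (tendsto_rpow_atTop (by linarith))
  have hmain : Tendsto
      (fun y : ℝ => (((m:ℝ) - 1) * F) *
        (((y + 1) / y) ^ (α + 1) * (y ^ (α + 1) / (y ^ (α + 1) - 1))))
      atTop (nhds ((((m:ℝ) - 1) * F) * (1 * 1))) := tendsto_const_nhds.mul (h1.mul h2)
  rw [mul_one, mul_one] at hmain
  refine hmain.congr' ?_
  filter_upwards [eventually_ge_atTop (2:ℝ)] with y hy
  have hy0 : (0:ℝ) < y := by linarith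
  have hy1 : (1:ℝ) < y := by linarith
  have hyα : y ^ α ≠ 0 := (Real.rpow_pos_of_pos hy0 α).ne'
  have hyp0 : y ^ (α + 1) ≠ 0 := (Real.rpow_pos_of_pos hy0 (α + 1)).ne'
  have hyp1 : 1 < y ^ (α + 1) :=
    (Real.one_lt_rpow_iff_of_pos hy0).mpr (Or.inl ⟨hy1, by linarith⟩)
  have hden : y ^ (α + 1) - 1 ≠ 0 := by linarith
  have hα1 : α + 1 ≠ 0 := by linarith
  set A := (y + 1) * (q - 1) / ((m:ℝ) * q - 1) with hA
  have hyA : y + 1 - A = (y + 1) * (q * (((m:ℝ) - 1) / ((m:ℝ) * q - 1))) := by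
    rw [hA]; field_simp [show q * (m:ℝ) - 1 ≠ 0 by linarith]; ring
  have hyB : y + 1 - A * m = (y + 1) * (((m:ℝ) - 1) / ((m:ℝ) * q - 1)) := by
    rw [hA]; field_simp [show q * (m:ℝ) - 1 ≠ 0 by linarith]; ring
  have hqpow : q ^ (α + 1) = (m:ℝ) * q := by
    rw [hq, ← Real.rpow_mul hmpos.le, show 1 / α * (α + 1) = 1 + 1 / α by field_simp, hM]
  have e1 : (∫ x in A..(A * m), (y + 1 - x) ^ α / y ^ α)
      = ((y + 1 - A) ^ (α + 1) - (y + 1 - A * m) ^ (α + 1)) / (α + 1) / y ^ α := by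
    rw [intervalIntegral.integral_div,
      intervalIntegral.integral_comp_sub_left (fun u => u ^ α) (y + 1),
      integral_rpow (Or.inl (by linarith : (-1:ℝ) < α))]
  have e2 : (∫ x in (1:ℝ)..y, (y + 1 - x) ^ α / y ^ α)
      = (y ^ (α + 1) - 1) / (α + 1) / y ^ α := by
    rw [intervalIntegral.integral_div,
      intervalIntegral.integral_comp_sub_left (fun u => u ^ α) (y + 1),
      integral_rpow (Or.inl (by linarith : (-1:ℝ) < α)),
      show y + 1 - 1 = y by ring, show y + 1 - y = (1:ℝ) by ring, Real.one_rpow]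
  have hf1 : (((m:ℝ) - 1) / ((m:ℝ) * q - 1)) * ((m:ℝ) * q - 1) = (m:ℝ) - 1 :=
    div_mul_cancel₀ _ hmq0.ne'
  have enum : (y + 1 - A) ^ (α + 1) - (y + 1 - A * m) ^ (α + 1)
      = (y + 1) ^ (α + 1) * (F * ((m:ℝ) - 1)) := by
    rw [hyA, hyB, Real.mul_rpow (by linarith) (by positivity),
      Real.mul_rpow hq0 hfrac0.le, hqpow,
      Real.mul_rpow (by linarith) hfrac0.le, Real.rpow_add_one hfrac0.ne' α, hF]
    linear_combination ((y + 1) ^ (α + 1) * (((m:ℝ) - 1) / ((m:ℝ) * q - 1)) ^ α) * hf1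
  rw [e1, e2, enum, Real.div_rpow (by linarith : (0:ℝ) ≤ y + 1) hy0.le]
  field_simp
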